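/- Consider the single-matrix IFS S_i(z) = rM(z + d_i) on ℝ^d with 0 < r < 1, M orthogonal, digit set D = {d_1,...,d_N}. Every neighbor map S_J^{-1} ∘ S_I with |I| = |J| = n and i_1 ≠ j_1 is a translation z ↦ z + b with b ∈ D* = ⋃_{n≥1} {Σ_{k=0}^{n-1} (rM)^{-k} x_k : x_k ∈ D − D}. Consequently, if D* is uniformly discrete (inf_{x≠y ∈ D*} |x−y| > 0), the IFS satisfies the finite type condition. -/

import Mathlib

set_option linter.unusedSectionVars false

/-- `wordEquiv S [i₁,…,iₘ] = S i₁ ∘ ⋯ ∘ S iₘ` (as an equivalence). -/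
def wordEquiv {E : Type*} {N : ℕ} (S : Fin N → E ≃ E) (I : List (Fin N)) : E ≃ E :=
  I.foldr (fun i e => e.trans (S i)) (Equiv.refl E)

/-- The neighbor map `S_J⁻¹ ∘ S_I`. -/
def nbrMap {E : Type*} {N : ℕ} (S : Fin N → E ≃ E) (I J : List (Fin N)) : E ≃ E :=
  (wordEquiv S I).trans (wordEquiv S J).symm

section Helpers

variable {E : Type*} [AddCommGroup E] {N : ℕ}

/-- translation part of the word map -/
def cL (g : E → E) (dvec : Fin N → E) : List (Fin N) → E
  | [] => 0
  | i :: t => g (cL g dvec t + dvec i)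

lemma wordEquiv_nil (S : Fin N → E ≃ E) (z : E) : wordEquiv S [] z = z := rfl

lemma wordEquiv_cons (S : Fin N → E ≃ E) (i : Fin N) (t : List (Fin N)) (z : E) :
    wordEquiv S (i :: t) z = S i (wordEquiv S t z) := rfl

lemma iter_add {g : E → E} (hg : ∀ a b, g (a + b) = g a + g b) (n : ℕ) (a b : E) :
    g^[n] (a + b) = g^[n] a + g^[n] b :=
  iterate_map_add (AddMonoidHom.mk' g hg) n a b

lemma iter_sub {g : E → E} (hg : ∀ a b, g (a + b) = g a + g b) (n : ℕ) (a b : E) :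
    g^[n] (a - b) = g^[n] a - g^[n] b :=
  iterate_map_sub (AddMonoidHom.mk' g hg) n a b

lemma iter_zero {g : E → E} (hg : ∀ a b, g (a + b) = g a + g b) (n : ℕ) :
    g^[n] (0 : E) = 0 :=
  iterate_map_zero (AddMonoidHom.mk' g hg) n

lemma iter_sum {g : E → E} (hg : ∀ a b, g (a + b) = g a + g b) (n : ℕ)
    {ι : Type*} (s : Finset ι) (f : ι → E) :
    g^[n] (∑ k ∈ s, f k) = ∑ k ∈ s, g^[n] (f k) := by
  classical
  induction s using Finset.induction with
  | empty => simpa using iter_zero hg n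
  | @insert a s h ih =>
    rw [Finset.sum_insert h, Finset.sum_insert h, iter_add hg, ih]

lemma word_apply (S : Fin N → E ≃ E) (g : E → E) (dvec : Fin N → E)
    (hS : ∀ i z, S i z = g (z + dvec i)) (hg : ∀ a b, g (a + b) = g a + g b) :
    ∀ (L : List (Fin N)) (z : E), wordEquiv S L z = g^[L.length] z + cL g dvec L := by
  intro L
  induction L with
  | nil => intro z; simp [wordEquiv_nil, cL]
  | cons i t ih =>
    intro z
    rw [wordEquiv_cons, ih, hS, List.length_cons, Function.iterate_succ_apply']
    show g (g^[t.length] z + cL g dvec t + dvec i) = g (g^[t.length] z) + cL g dvec (i :: t)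
    rw [add_assoc, hg]
    rfl

lemma cL_ofFn (g : E → E) (dvec : Fin N → E) (hg : ∀ a b, g (a + b) = g a + g b) :
    ∀ (n : ℕ) (I : Fin n → Fin N),
      cL g dvec (List.ofFn I) = ∑ k : Fin n, g^[(k : ℕ) + 1] (dvec (I k)) := by
  intro n
  induction n with
  | zero => intro I; simp [List.ofFn_zero, cL]
  | succ n ih =>
    intro I
    rw [List.ofFn_succ]
    show g (cL g dvec (List.ofFn fun k => I k.succ) + dvec (I 0)) = _
    rw [ih, hg, show g (∑ k : Fin n, g^[(k:ℕ) + 1] (dvec (I k.succ)))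
        = g^[1] (∑ k : Fin n, g^[(k:ℕ) + 1] (dvec (I k.succ))) from rfl,
      iter_sum hg 1, Fin.sum_univ_succ]
    simp only [Function.iterate_one, ← Function.iterate_succ_apply' g, Fin.val_succ,
      Fin.val_zero, zero_add]
    rw [add_comm]

end Helpers

/-- A bounded δ-separated set in a proper metric space is finite. -/
lemma finite_of_separated_of_isBounded {X : Type*} [MetricSpace X] [ProperSpace X]
    {T : Set X} (hB : Bornology.IsBounded T) {δ : ℝ} (hδ : 0 < δ)
    (hsep : ∀ x ∈ T, ∀ y ∈ T, x ≠ y → δ ≤ dist x y) : T.Finite := by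
  classical
  have htb : TotallyBounded T :=
    TotallyBounded.subset subset_closure hB.isCompact_closure.totallyBounded
  rcases (Metric.totallyBounded_iff.1 htb) (δ/2) (by linarith) with ⟨t, htf, hsub⟩
  have hmem : ∀ b ∈ T, ∃ y ∈ t, b ∈ Metric.ball y (δ/2) := by
    intro b hb; simpa using hsub hb
  choose! f hf1 hf2 using hmem
  apply Set.Finite.of_finite_image (f := f) (htf.subset ?_) ?_
  · rintro _ ⟨b, hb, rfl⟩
    exact hf1 b hb
  · intro a ha b hb hab
    by_contra hne
    have h1 := hf2 a ha
    have h2 := hf2 b hb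
    rw [hab] at h1
    rw [Metric.mem_ball] at h1 h2
    have : dist a b < δ := by
      calc dist a b ≤ dist a (f b) + dist (f b) b := dist_triangle _ _ _
      _ < δ/2 + δ/2 := by rw [dist_comm (f b) b]; linarith
      _ = δ := by ring
    exact absurd (hsep a ha b hb hne) (not_le.2 this)

/-- the contraction map `z ↦ r • M z` -/
noncomputable def gmap (r : ℝ) {d : ℕ} (M : EuclideanSpace ℝ (Fin d) ≃ₗᵢ[ℝ] EuclideanSpace ℝ (Fin d)) :
    EuclideanSpace ℝ (Fin d) → EuclideanSpace ℝ (Fin d) := fun z => r • M z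

/-- the expansion map `z ↦ r⁻¹ • M⁻¹ z` -/
noncomputable def hmap (r : ℝ) {d : ℕ} (M : EuclideanSpace ℝ (Fin d) ≃ₗᵢ[ℝ] EuclideanSpace ℝ (Fin d)) :
    EuclideanSpace ℝ (Fin d) → EuclideanSpace ℝ (Fin d) := fun z => r⁻¹ • M.symm z

variable {d : ℕ} {r : ℝ} {M : EuclideanSpace ℝ (Fin d) ≃ₗᵢ[ℝ] EuclideanSpace ℝ (Fin d)}

lemma gmap_add (a b : EuclideanSpace ℝ (Fin d)) :
    gmap r M (a + b) = gmap r M a + gmap r M b := by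
  simp [gmap, map_add, smul_add]

lemma hmap_add (a b : EuclideanSpace ℝ (Fin d)) :
    hmap r M (a + b) = hmap r M a + hmap r M b := by
  simp [hmap, map_add, smul_add]

lemma hmap_gmap (hr : r ≠ 0) : Function.LeftInverse (hmap r M) (gmap r M) := by
  intro z
  simp [gmap, hmap, map_smul, smul_smul, inv_mul_cancel₀ hr]

lemma gmap_hmap (hr : r ≠ 0) : Function.LeftInverse (gmap r M) (hmap r M) := by
  intro z
  simp [gmap, hmap, map_smul, smul_smul, mul_inv_cancel₀ hr]

theorem single_matrix_neighbor_maps_are_translations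
    {d N : ℕ}
    (r : ℝ) (hr : 0 < r ∧ r < 1)
    (M : EuclideanSpace ℝ (Fin d) ≃ₗᵢ[ℝ] EuclideanSpace ℝ (Fin d))
    (dvec : Fin N → EuclideanSpace ℝ (Fin d))
    (S : Fin N → (EuclideanSpace ℝ (Fin d) ≃ EuclideanSpace ℝ (Fin d)))
    (hS : ∀ i z, S i z = r • M (z + dvec i))
    (K : Set (EuclideanSpace ℝ (Fin d)))
    (hKne : K.Nonempty) (hKc : IsCompact K)
    (hKinv : K = ⋃ i, (S i : EuclideanSpace ℝ (Fin d) → EuclideanSpace ℝ (Fin d)) '' K)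
    (Dstar : Set (EuclideanSpace ℝ (Fin d)))
    (hDstar : Dstar = {b : EuclideanSpace ℝ (Fin d) | ∃ n : ℕ, 1 ≤ n ∧
      ∃ x : ℕ → EuclideanSpace ℝ (Fin d),
        (∀ k < n, ∃ u v : Fin N, x k = dvec u - dvec v) ∧
        b = ∑ k ∈ Finset.range n,
          (fun z : EuclideanSpace ℝ (Fin d) => r⁻¹ • M.symm z)^[k] (x k)}) :
    (∀ n : ℕ, 1 ≤ n → ∀ I J : Fin n → Fin N,
      (hn : 0 < n) → I ⟨0, hn⟩ ≠ J ⟨0, hn⟩ →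
      ∃ b ∈ Dstar, ∀ z : EuclideanSpace ℝ (Fin d),
        nbrMap S (List.ofFn I) (List.ofFn J) z = z + b) ∧
    ((∃ δ : ℝ, 0 < δ ∧ ∀ x ∈ Dstar, ∀ y ∈ Dstar, x ≠ y → δ ≤ dist x y) →
      Set.Finite {b : EuclideanSpace ℝ (Fin d) | b ∈ Dstar ∧
        ((fun z => z + b) '' K ∩ K).Nonempty}) := by
  obtain ⟨hr0, hr1⟩ := hr
  have hrne : r ≠ 0 := ne_of_gt hr0
  constructor
  · -- neighbor maps are translations
    intro n hn1 I J hn _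
    have hS' : ∀ i z, S i z = gmap r M (z + dvec i) := hS
    set cI := cL (gmap r M) dvec (List.ofFn I) with hcI
    set cJ := cL (gmap r M) dvec (List.ofFn J) with hcJ
    set b := (hmap r M)^[n] (cI - cJ) with hb
    -- the summand function
    set y : ℕ → EuclideanSpace ℝ (Fin d) := fun m =>
      if hm : m < n then dvec (I ⟨m, hm⟩) - dvec (J ⟨m, hm⟩) else 0 with hy
    refine ⟨b, ?_, ?_⟩
    · rw [hDstar]
      refine ⟨n, hn1, fun m => y (n - 1 - m), ?_, ?_⟩
      · intro k hk
        have h1 : n - 1 - k < n := by omega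
        exact ⟨I ⟨n - 1 - k, h1⟩, J ⟨n - 1 - k, h1⟩, by simp only [hy, dif_pos h1]⟩
      · show b = ∑ k ∈ Finset.range n, (hmap r M)^[k] (y (n - 1 - k))
        have e1 : cI - cJ = ∑ k : Fin n, (gmap r M)^[(k : ℕ) + 1] (dvec (I k) - dvec (J k)) := by
          rw [hcI, hcJ, cL_ofFn _ _ gmap_add, cL_ofFn _ _ gmap_add, ← Finset.sum_sub_distrib]
          exact Finset.sum_congr rfl fun k _ => (iter_sub gmap_add _ _ _).symm
        have e2 : b = ∑ k : Fin n, (hmap r M)^[n - 1 - (k : ℕ)] (dvec (I k) - dvec (J k)) := by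
          rw [hb, e1, iter_sum hmap_add]
          refine Finset.sum_congr rfl fun k _ => ?_
          have hk : (k : ℕ) < n := k.2
          have hsplit : ∀ w, (hmap r M)^[n] w
              = (hmap r M)^[n - 1 - (k : ℕ)] ((hmap r M)^[(k : ℕ) + 1] w) := by
            intro w
            rw [← Function.iterate_add_apply]
            congr 1
            omega
          rw [hsplit]
          exact congrArg _ ((hmap_gmap hrne).iterate ((k : ℕ) + 1) _)
        rw [e2]
        have e3 : ∀ k : Fin n, (hmap r M)^[n - 1 - (k : ℕ)] (dvec (I k) - dvec (J k))
            = (fun j => (hmap r M)^[n - 1 - j] (y j)) (k : ℕ) := by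
          intro k
          simp only [hy, dif_pos k.2, Fin.eta]
        rw [Finset.sum_congr rfl fun k _ => e3 k,
          Fin.sum_univ_eq_sum_range (fun j => (hmap r M)^[n - 1 - j] (y j)) n,
          ← Finset.sum_range_reflect (fun j => (hmap r M)^[j] (y (n - 1 - j))) n]
        refine Finset.sum_congr rfl fun j hj => ?_
        have hjn : j < n := Finset.mem_range.1 hj
        have : n - 1 - (n - 1 - j) = j := by omega
        rw [this]
    · intro z
      have hw := word_apply S (gmap r M) dvec hS' gmap_add
      have hlen : ∀ (F : Fin n → Fin N), (List.ofFn F).length = n := fun F => List.length_ofFn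
      have key : wordEquiv S (List.ofFn J) (z + b) = wordEquiv S (List.ofFn I) z := by
        rw [hw, hw, hlen, hlen, iter_add gmap_add, hb,
          (gmap_hmap hrne).iterate n (cI - cJ)]
        abel
      show (wordEquiv S (List.ofFn J)).symm (wordEquiv S (List.ofFn I) z) = z + b
      rw [← key, Equiv.symm_apply_apply]
  · -- finite type
    rintro ⟨δ, hδ, hsep⟩
    obtain ⟨R, hR⟩ := hKc.isBounded.subset_closedBall 0
    apply finite_of_separated_of_isBounded ?_ hδ ?_
    · refine (Metric.isBounded_closedBall (x := (0 : EuclideanSpace ℝ (Fin d))) (r := R + R)).subset ?_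
      rintro b ⟨-, w, ⟨x, hxK, rfl⟩, hwK⟩
      have hx : ‖x‖ ≤ R := by simpa [dist_zero_right] using hR hxK
      have hw' : ‖x + b‖ ≤ R := by simpa [dist_zero_right] using hR hwK
      have : ‖b‖ ≤ R + R := by
        calc ‖b‖ = ‖(x + b) - x‖ := by rw [add_sub_cancel_left]
        _ ≤ ‖x + b‖ + ‖x‖ := norm_sub_le _ _
        _ ≤ R + R := by linarith
      simpa [Metric.mem_closedBall, dist_zero_right] using this
    · intro a ha b hb hne
      exact hsep a ha.1 b hb.1 hne
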